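/- The cyclic planar rook monoid mPRo_n is an inverse monoid: it is regular and its idempotents commute. In particular, every idempotent of mPRo_n contains no diagonal through strands (its partition contains no pair {i, j'} with i ≠ j), and any two idempotents commute. -/

import Mathlib

/-- A planar rook diagram on `n` strands: a strictly order-preserving partial
injection of `Fin n` (through strands join `i` on the bottom to `f i` on the top;
planarity is exactly strict monotonicity on the domain). -/
def PRoDiag (n : ℕ) :=
  {f : Fin n → Option (Fin n) //
    ∀ ⦃i j : Fin n⦄ ⦃a b : Fin n⦄, f i = some a → f j = some b → i < j → a < b}

/-- The `m`-cyclic planar rook monoid `mPRo_n`: planar rook diagrams together with an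
internal-circle count in `ℤ_m`. -/
def CyclicPRo (n m : ℕ) := PRoDiag n × ZMod m

instance (n m : ℕ) : Monoid (CyclicPRo n m) where
  mul p q := (⟨fun i => (q.1.1 i).bind p.1.1, by
    intro i j a b ha hb hij
    obtain ⟨k, hk, hpk⟩ := Option.bind_eq_some_iff.mp ha
    obtain ⟨l, hl, hpl⟩ := Option.bind_eq_some_iff.mp hb
    exact p.1.2 hpk hpl (q.1.2 hk hl hij)⟩, p.2 + q.2)
  one := (⟨fun i => some i, by intro i j a b ha hb h; simp_all⟩, 0)
  mul_assoc := by
    intro p q r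
    refine Prod.ext (Subtype.ext ?_) (add_assoc _ _ _)
    funext i
    show (r.1.1 i).bind (fun k => (q.1.1 k).bind p.1.1) = ((r.1.1 i).bind q.1.1).bind p.1.1
    cases r.1.1 i <;> rfl
  one_mul := by
    intro p
    refine Prod.ext (Subtype.ext ?_) (zero_add _)
    funext i
    show (p.1.1 i).bind some = p.1.1 i
    cases p.1.1 i <;> rfl
  mul_one := by
    intro p
    exact Prod.ext (Subtype.ext rfl) (add_zero _)

/-- The cyclic planar rook monoid `mPRo_n` is an inverse monoid: it is regular, its
idempotents have no diagonal through strands, and its idempotents commute. -/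
theorem stmt18 (n m : ℕ) [NeZero m] :
    (∀ a : CyclicPRo n m, ∃ x : CyclicPRo n m, a * x * a = a) ∧
    (∀ e : CyclicPRo n m, e * e = e → ∀ i j : Fin n, e.1.1 i = some j → j = i) ∧
    (∀ e f : CyclicPRo n m, e * e = e → f * f = f → e * f = f * e) := by

  refine ⟨?_, ?_, ?_⟩
  · -- regularity
    rintro ⟨⟨f, hf⟩, c⟩
    have hinj : ∀ {i i' j : Fin n}, f i = some j → f i' = some j → i = i' := by
      intro i i' j h h'
      rcases lt_trichotomy i i' with h1 | h1 | h1
      · exact absurd (hf h h' h1) (lt_irrefl j)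
      · exact h1
      · exact absurd (hf h' h h1) (lt_irrefl j)
    set g : Fin n → Option (Fin n) :=
      fun j => (List.finRange n).find? (fun i => f i = some j) with hg
    have hgsome : ∀ {j i}, g j = some i → f i = some j := by
      intro j i h
      have := List.find?_some h
      simpa using this
    have hgof : ∀ {i j}, f i = some j → g j = some i := by
      intro i j h
      cases hgj : g j with
      | none =>
        have := List.find?_eq_none.mp hgj i (List.mem_finRange i)
        simp [h] at this
      | some i' =>
        have h2 : f i' = some j := hgsome hgj
        exact congrArg some (hinj h2 h)
    have hgmono : ∀ ⦃i j a b : Fin n⦄, g i = some a → g j = some b → i < j → a < b := by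
      intro i j a b ha hb hij
      have h1 := hgsome ha
      have h2 := hgsome hb
      rcases lt_trichotomy a b with h | h | h
      · exact h
      · subst h
        rw [h1] at h2
        exact absurd ((Option.some_injective _ h2) ▸ hij) (lt_irrefl _)
      · exact absurd (lt_trans hij (hf h2 h1 h)) (lt_irrefl _)
    refine ⟨(⟨g, hgmono⟩, -c), ?_⟩
    refine Prod.ext (Subtype.ext ?_) (by show c + -c + c = c; ring)
    funext i
    show (f i).bind (fun k => (g k).bind f) = f i
    cases hfi : f i with
    | none => rfl
    | some j =>
      show (g j).bind f = some j
      rw [hgof hfi]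
      exact hfi
  · intro e he i j hij
    have hcomp : ∀ k, (e.1.1 k).bind e.1.1 = e.1.1 k := by
      intro k
      exact congrFun (congrArg (fun z => z.1.1) he) k
    have hj : e.1.1 j = some j := by
      have := hcomp i
      rw [hij] at this
      exact this
    rcases lt_trichotomy i j with h | h | h
    · exact absurd (e.1.2 hij hj h) (lt_irrefl j)
    · exact h.symm
    · exact absurd (e.1.2 hj hij h) (lt_irrefl j)
  · intro e f he hf
    have hed : ∀ i, e.1.1 i = none ∨ e.1.1 i = some i := by
      intro i
      cases h : e.1.1 i with
      | none => exact Or.inl rfl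
      | some j =>
        right
        have hcomp : (e.1.1 i).bind e.1.1 = e.1.1 i :=
          congrFun (congrArg (fun z => z.1.1) he) i
        have hj : e.1.1 j = some j := by rw [h] at hcomp; exact hcomp
        rcases lt_trichotomy i j with h1 | h1 | h1
        · exact absurd (e.1.2 h hj h1) (lt_irrefl j)
        · exact congrArg some h1.symm
        · exact absurd (e.1.2 hj h h1) (lt_irrefl j)
    have hfd : ∀ i, f.1.1 i = none ∨ f.1.1 i = some i := by
      intro i
      cases h : f.1.1 i with
      | none => exact Or.inl rfl
      | some j =>
        right
        have hcomp : (f.1.1 i).bind f.1.1 = f.1.1 i :=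
          congrFun (congrArg (fun z => z.1.1) hf) i
        have hj : f.1.1 j = some j := by rw [h] at hcomp; exact hcomp
        rcases lt_trichotomy i j with h1 | h1 | h1
        · exact absurd (f.1.2 h hj h1) (lt_irrefl j)
        · exact congrArg some h1.symm
        · exact absurd (f.1.2 hj h h1) (lt_irrefl j)
    refine Prod.ext (Subtype.ext ?_) (add_comm _ _)
    funext i
    show (f.1.1 i).bind e.1.1 = (e.1.1 i).bind f.1.1
    rcases hed i with h1 | h1 <;> rcases hfd i with h2 | h2 <;> simp [h1, h2]
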